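/- Let A be a real m×n matrix and let s ≤ n. Every s-sparse vector x ∈ ℝⁿ is the unique solution of the basis pursuit problem min ‖x'‖₁ subject to A x' = A x (i.e., for every s-sparse x and every x' ∈ ℝⁿ with A x' = A x and ‖x'‖₁ ≤ ‖x‖₁ one has x' = x) if and only if A satisfies the null space property of order s. -/
import Mathlib


/-- The ℓ₁ norm of a vector in ℝⁿ. -/
def l1norm {n : ℕ} (x : Fin n → ℝ) : ℝ := ∑ i, |x i|

/-- A vector is `s`-sparse if it has at most `s` nonzero entries. -/
def Sparse {n : ℕ} (s : ℕ) (x : Fin n → ℝ) : Prop :=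
  (Finset.univ.filter fun i => x i ≠ 0).card ≤ s

/-- The null space property of order `s`: every nonzero vector `v` in the null space of `A`
satisfies `‖v_S‖₁ < ‖v_{Sᶜ}‖₁` for every index set `S` of cardinality at most `s`. -/
def NSP {m n : ℕ} (A : Matrix (Fin m) (Fin n) ℝ) (s : ℕ) : Prop :=
  ∀ v : Fin n → ℝ, A.mulVec v = 0 → v ≠ 0 →
    ∀ S : Finset (Fin n), S.card ≤ s → ∑ i ∈ S, |v i| < ∑ i ∈ Sᶜ, |v i|

/-- Every `s`-sparse vector `x` is the unique solution of the basis pursuit problem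
`min ‖x'‖₁ s.t. A x' = A x` if and only if `A` satisfies the null space property of
order `s`. -/
theorem basisPursuit_unique_iff_nsp {m n : ℕ} (s : ℕ) (hs : s ≤ n)
    (A : Matrix (Fin m) (Fin n) ℝ) :
    (∀ x : Fin n → ℝ, Sparse s x → ∀ x' : Fin n → ℝ,
      A.mulVec x' = A.mulVec x → l1norm x' ≤ l1norm x → x' = x) ↔ NSP A s := by
  constructor
  · -- uniqueness → NSP
    intro h v hv hv0 S hS
    by_contra hcon
    push_neg at hcon
    set x : Fin n → ℝ := fun i => if i ∈ S then v i else 0 with hx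
    have hsp : Sparse s x := by
      refine le_trans (Finset.card_le_card ?_) hS
      intro i hi
      simp only [Finset.mem_filter, hx] at hi
      by_contra hiS
      exact hi.2 (if_neg hiS)
    have hAx : A.mulVec (x - v) = A.mulVec x := by
      rw [Matrix.mulVec_sub, hv, sub_zero]
    have hl1 : l1norm (x - v) ≤ l1norm x := by
      have h1 : l1norm (x - v) = ∑ i ∈ Sᶜ, |v i| := by
        unfold l1norm
        rw [← Finset.sum_add_sum_compl S]
        have e1 : ∀ i ∈ S, |(x - v) i| = 0 := by
          intro i hi; simp [hx, if_pos hi]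
        have e2 : ∀ i ∈ Sᶜ, |(x - v) i| = |v i| := by
          intro i hi
          rw [Finset.mem_compl] at hi
          simp [hx, if_neg hi]
        rw [Finset.sum_congr rfl e1, Finset.sum_congr rfl e2]
        simp
      have h2 : l1norm x = ∑ i ∈ S, |v i| := by
        unfold l1norm
        rw [← Finset.sum_add_sum_compl S]
        have e1 : ∀ i ∈ S, |x i| = |v i| := by
          intro i hi; simp [hx, if_pos hi]
        have e2 : ∀ i ∈ Sᶜ, |x i| = 0 := by
          intro i hi
          rw [Finset.mem_compl] at hi
          simp [hx, if_neg hi]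
        rw [Finset.sum_congr rfl e1, Finset.sum_congr rfl e2]
        simp
      rw [h1, h2]; exact hcon
    have := h x hsp (x - v) hAx hl1
    apply hv0
    funext i
    have h2 : (x - v) i = x i := by rw [this]
    have : x i - v i = x i := h2
    have : v i = 0 := by linarith
    exact this
  · -- NSP → uniqueness
    intro hN x hsp x' hA hl
    by_contra hne
    set v : Fin n → ℝ := x - x' with hvdef
    have hv0 : v ≠ 0 := sub_ne_zero_of_ne (fun h => hne h.symm)
    have hAv : A.mulVec v = 0 := by
      rw [hvdef, Matrix.mulVec_sub, hA, sub_self]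
    set S : Finset (Fin n) := Finset.univ.filter fun i => x i ≠ 0 with hSdef
    have hkey := hN v hAv hv0 S hsp
    have hx0 : ∀ i ∈ Sᶜ, x i = 0 := by
      intro i hi
      rw [Finset.mem_compl, hSdef] at hi
      simpa using hi
    have hlx : l1norm x = ∑ i ∈ S, |x i| := by
      unfold l1norm
      rw [← Finset.sum_add_sum_compl S]
      have : ∀ i ∈ Sᶜ, |x i| = 0 := fun i hi => by rw [hx0 i hi]; simp
      rw [Finset.sum_congr rfl this]
      simp
    have hlx' : (∑ i ∈ S, |x i| - ∑ i ∈ S, |v i|) + ∑ i ∈ Sᶜ, |v i| ≤ l1norm x' := by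
      unfold l1norm
      rw [← Finset.sum_add_sum_compl S]
      apply add_le_add
      · rw [← Finset.sum_sub_distrib]
        apply Finset.sum_le_sum
        intro i _
        have : x' i = x i - v i := by simp [hvdef]
        rw [this]
        exact abs_sub_abs_le_abs_sub _ _
      · apply le_of_eq
        apply Finset.sum_congr rfl
        intro i hi
        have : v i = x i - x' i := by simp [hvdef]
        rw [this, hx0 i hi, zero_sub, abs_neg]
    have : l1norm x < l1norm x' := by
      rw [hlx]
      calc ∑ i ∈ S, |x i|
          < (∑ i ∈ S, |x i| - ∑ i ∈ S, |v i|) + ∑ i ∈ Sᶜ, |v i| := by linarith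
        _ ≤ l1norm x' := hlx'
    linarith
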